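/- Fix integers n ≥ 1, c ≥ 1 and m ∈ {0, …, c}. Let (A₁, A₂; C₁, …, C_n; e) be a tuple satisfying condition (P1) and such that A_{2m} is invertible. Then the tuple satisfies condition (P3) if and only if the triple (B_m, E_m, e) satisfies condition (T2). -/

import Mathlib

open Matrix

abbrev Mat (c : ℕ) := Matrix (Fin c) (Fin c) ℂ

noncomputable def cS (c : ℕ) (m : ℤ) : ℂ :=
  ((Real.cos (Real.pi * (m : ℝ) / ((c : ℝ) + 1)) : ℝ) : ℂ)

noncomputable def sS (c : ℕ) (m : ℤ) : ℂ :=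
  ((Real.sin (Real.pi * (m : ℝ) / ((c : ℝ) + 1)) : ℝ) : ℂ)

noncomputable def A1M (c : ℕ) (m : ℤ) (A1 A2 : Mat c) : Mat c :=
  cS c m • A1 - sS c m • A2

noncomputable def A2M (c : ℕ) (m : ℤ) (A1 A2 : Mat c) : Mat c :=
  sS c m • A1 + cS c m • A2

noncomputable def BM (c : ℕ) (m : ℤ) (A1 A2 : Mat c) : Mat c :=
  (A2M c m A1 A2)⁻¹ * A1M c m A1 A2

noncomputable def DM (n c : ℕ) (m : ℤ) (C : Fin n → Mat c) : Mat c :=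
  ∑ q : Fin n, (((n - 1).choose q.val : ℂ) * cS c m ^ (n - 1 - q.val) * sS c m ^ q.val) • C q

noncomputable def EM (n c : ℕ) (m : ℤ) (A1 A2 : Mat c) (C : Fin n → Mat c) : Mat c :=
  DM n c m C * A2M c m A1 A2

/-- Condition (P1). -/
def CondP1 (n c : ℕ) (A1 A2 : Mat c) (C : Fin n → Mat c) : Prop :=
  (∀ h : n = 1, A1 * C ⟨0, by omega⟩ * A2 = A2 * C ⟨0, by omega⟩ * A1) ∧
  ∀ q : ℕ, ∀ hq : q + 1 < n,
    A1 * C ⟨q, by omega⟩ = A2 * C ⟨q + 1, hq⟩ ∧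
    C ⟨q, by omega⟩ * A1 = C ⟨q + 1, hq⟩ * A2

/-- Condition (P2). -/
def CondP2 (c : ℕ) (A1 A2 : Mat c) : Prop :=
  ∃ ν : ℂ × ℂ, ν ≠ 0 ∧ (ν.1 • A1 + ν.2 • A2).det ≠ 0

/-- Condition (P3), with `C1`, `Cn` the first and last of the `C` matrices. -/
def CondP3 (n c : ℕ) (A1 A2 C1 Cn : Mat c) (e : Fin c → ℂ) : Prop :=
  ∀ l1 l2 m1 m2 : ℂ, (l1, l2) ≠ 0 → l1 ^ n * m1 + l2 ^ n * m2 = 0 →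
    ∀ v : Fin c → ℂ,
      (l2 • A1 + l1 • A2).mulVec v = 0 →
      (C1 * A2 + m1 • 1).mulVec v = 0 →
      (Cn * A1 + ((-1 : ℂ) ^ (n - 1) * m2) • 1).mulVec v = 0 →
      e ⬝ᵥ v = 0 → v = 0

/-- Membership in `P^n(c)`: conditions (P1), (P2), (P3). -/
def CondP (n c : ℕ) (hn : 0 < n) (A1 A2 : Mat c) (C : Fin n → Mat c) (e : Fin c → ℂ) : Prop :=
  CondP1 n c A1 A2 C ∧ CondP2 c A1 A2 ∧
    CondP3 n c A1 A2 (C ⟨0, hn⟩) (C ⟨n - 1, by omega⟩) e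

/-- Condition (T2). -/
def CondT2 (c : ℕ) (b1 b2 : Mat c) (e : Fin c → ℂ) : Prop :=
  ∀ z w : ℂ, ∀ v : Fin c → ℂ,
    (b1 + z • 1).mulVec v = 0 → (b2 + w • 1).mulVec v = 0 → e ⬝ᵥ v = 0 → v = 0

/-- ADHM data: conditions (T1) and (T2). -/
def ADHM (c : ℕ) (b1 b2 : Mat c) (e : Fin c → ℂ) : Prop :=
  b1 * b2 = b2 * b1 ∧ CondT2 c b1 b2 e

section Stmt8Aux

private lemma trigsq (c : ℕ) (m : ℤ) : cS c m ^ 2 + sS c m ^ 2 = 1 := by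
  have h := Real.cos_sq_add_sin_sq (Real.pi * (m : ℝ) / ((c : ℝ) + 1))
  unfold cS sS
  exact_mod_cast congrArg (Complex.ofReal) h

private lemma sum_mulVec' {c : ℕ} {ι : Type*} (s : Finset ι) (M : ι → Mat c)
    (v : Fin c → ℂ) : (∑ i ∈ s, M i).mulVec v = ∑ i ∈ s, (M i).mulVec v := by
  induction s using Finset.cons_induction with
  | empty => simp [Matrix.zero_mulVec]
  | cons a s ha ih => rw [Finset.sum_cons, Finset.sum_cons, Matrix.add_mulVec, ih]

private lemma mulVec_eq_zero_of_isUnit {c : ℕ} (A : Mat c) (h : IsUnit A)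
    (v : Fin c → ℂ) (hv : A.mulVec v = 0) : v = 0 := by
  have := h.invertible
  calc v = (A⁻¹ * A).mulVec v := by rw [Matrix.inv_mul_of_invertible]; simp
    _ = A⁻¹.mulVec (A.mulVec v) := (Matrix.mulVec_mulVec ..).symm
    _ = 0 := by rw [hv, Matrix.mulVec_zero]

/-- rotation identity -/
private lemma rotA (c : ℕ) (m : ℤ) (A1 A2 : Mat c) (l1 l2 : ℂ) :
    (cS c m * l2 - sS c m * l1) • A1M c m A1 A2
      + (cS c m * l1 + sS c m * l2) • A2M c m A1 A2 = l2 • A1 + l1 • A2 := by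
  have hcs := trigsq c m
  unfold A1M A2M
  match_scalars
  · linear_combination l2 * hcs
  · linear_combination l1 * hcs

private lemma smul_eq_of_add_smul_mulVec {c : ℕ} (A : Mat c) (a : ℂ) (v : Fin c → ℂ)
    (h : (A + a • 1).mulVec v = 0) : A.mulVec v = -(a • v) := by
  rw [Matrix.add_mulVec, Matrix.smul_mulVec, Matrix.one_mulVec] at h
  exact eq_neg_of_add_eq_zero_left h

private lemma chainA2 {n c : ℕ} (hn : 0 < n) (A1 A2 : Mat c) (C : Fin n → Mat c)
    (hP1 : CondP1 n c A1 A2 C) (v : Fin c → ℂ) (l1 l2 : ℂ)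
    (h1 : (l2 • A1 + l1 • A2).mulVec v = 0) :
    ∀ i, ∀ hi : i < n, l2 ^ i • (C ⟨i, hi⟩ * A2).mulVec v
      = (-l1) ^ i • (C ⟨0, hn⟩ * A2).mulVec v := by
  have hA : l2 • A1.mulVec v = -(l1 • A2.mulVec v) := by
    rw [Matrix.add_mulVec, Matrix.smul_mulVec, Matrix.smul_mulVec] at h1
    exact eq_neg_of_add_eq_zero_left h1
  intro i
  induction i with
  | zero => intro hi; simp
  | succ i ih =>
    intro hi
    have hi' : i < n := by omega
    have hC : C ⟨i + 1, hi⟩ * A2 = C ⟨i, hi'⟩ * A1 := ((hP1.2 i hi).2).symm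
    have h2 : l2 • (C ⟨i, hi'⟩ * A1).mulVec v = -(l1 • (C ⟨i, hi'⟩ * A2).mulVec v) := by
      rw [← Matrix.mulVec_mulVec, ← Matrix.mulVec_mulVec, ← Matrix.mulVec_smul, hA,
        Matrix.mulVec_neg, Matrix.mulVec_smul]
    calc l2 ^ (i+1) • (C ⟨i+1, hi⟩ * A2).mulVec v
        = l2 ^ i • (l2 • (C ⟨i, hi'⟩ * A1).mulVec v) := by
          rw [hC, smul_smul, ← pow_succ]
      _ = l2 ^ i • (-(l1 • (C ⟨i, hi'⟩ * A2).mulVec v)) := by rw [h2]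
      _ = -(l1 • (l2 ^ i • (C ⟨i, hi'⟩ * A2).mulVec v)) := by module
      _ = -(l1 • ((-l1) ^ i • (C ⟨0, hn⟩ * A2).mulVec v)) := by rw [ih hi']
      _ = (-l1) ^ (i+1) • (C ⟨0, hn⟩ * A2).mulVec v := by module

private lemma chainA1 {n c : ℕ} (hn : 0 < n) (A1 A2 : Mat c) (C : Fin n → Mat c)
    (hP1 : CondP1 n c A1 A2 C) (v : Fin c → ℂ) (l1 l2 : ℂ)
    (h1 : (l2 • A1 + l1 • A2).mulVec v = 0) :
    ∀ i, ∀ hi : i < n, l2 ^ (i+1) • (C ⟨i, hi⟩ * A1).mulVec v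
      = (-l1) ^ (i+1) • (C ⟨0, hn⟩ * A2).mulVec v := by
  have hA : l2 • A1.mulVec v = -(l1 • A2.mulVec v) := by
    rw [Matrix.add_mulVec, Matrix.smul_mulVec, Matrix.smul_mulVec] at h1
    exact eq_neg_of_add_eq_zero_left h1
  intro i hi
  have h2 : l2 • (C ⟨i, hi⟩ * A1).mulVec v = -(l1 • (C ⟨i, hi⟩ * A2).mulVec v) := by
    rw [← Matrix.mulVec_mulVec, ← Matrix.mulVec_mulVec, ← Matrix.mulVec_smul, hA,
      Matrix.mulVec_neg, Matrix.mulVec_smul]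
  calc l2 ^ (i+1) • (C ⟨i, hi⟩ * A1).mulVec v
      = l2 ^ i • (l2 • (C ⟨i, hi⟩ * A1).mulVec v) := by rw [smul_smul, ← pow_succ]
    _ = l2 ^ i • (-(l1 • (C ⟨i, hi⟩ * A2).mulVec v)) := by rw [h2]
    _ = -(l1 • (l2 ^ i • (C ⟨i, hi⟩ * A2).mulVec v)) := by module
    _ = -(l1 • ((-l1) ^ i • (C ⟨0, hn⟩ * A2).mulVec v)) := by
        rw [chainA2 hn A1 A2 C hP1 v l1 l2 h1 i hi]
    _ = (-l1) ^ (i+1) • (C ⟨0, hn⟩ * A2).mulVec v := by module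

private lemma EM_mulVec {n c : ℕ} (m : ℤ) (A1 A2 : Mat c) (C : Fin n → Mat c)
    (v : Fin c → ℂ) :
    (EM n c m A1 A2 C).mulVec v
      = ∑ q : Fin n, (((n - 1).choose q.val : ℂ) * cS c m ^ (n - 1 - q.val) * sS c m ^ q.val) •
          (sS c m • (C q * A1).mulVec v + cS c m • (C q * A2).mulVec v) := by
  simp only [EM, DM]
  rw [Finset.sum_mul, sum_mulVec']
  refine Finset.sum_congr rfl fun q _ => ?_
  rw [smul_mul_assoc, Matrix.smul_mulVec]
  congr 1
  rw [A2M, mul_add, mul_smul_comm, mul_smul_comm, Matrix.add_mulVec,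
    Matrix.smul_mulVec, Matrix.smul_mulVec]

private lemma keyEM {n c : ℕ} (hn : 0 < n) (m : ℤ) (A1 A2 : Mat c) (C : Fin n → Mat c)
    (hP1 : CondP1 n c A1 A2 C) (v : Fin c → ℂ) (l1 l2 : ℂ)
    (h1 : (l2 • A1 + l1 • A2).mulVec v = 0) :
    l2 ^ n • (EM n c m A1 A2 C).mulVec v
      = (cS c m * l2 - sS c m * l1) ^ n • (C ⟨0, hn⟩ * A2).mulVec v := by
  obtain ⟨N, rfl⟩ : ∃ N, n = N + 1 := ⟨n - 1, by omega⟩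
  rw [EM_mulVec, Finset.smul_sum]
  simp only [Nat.add_sub_cancel]
  have hterm : ∀ q : Fin (N + 1),
      l2 ^ (N + 1) • (((N.choose q.val : ℂ) * cS c m ^ (N - q.val) * sS c m ^ q.val) •
        (sS c m • (C q * A1).mulVec v + cS c m • (C q * A2).mulVec v))
      = (((N.choose q.val : ℂ) * (cS c m * l2) ^ (N - q.val)
            * (sS c m * -l1) ^ q.val) * (cS c m * l2 - sS c m * l1))
          • (C ⟨0, hn⟩ * A2).mulVec v := by
    rintro ⟨k, hk⟩
    have e1 := chainA1 hn A1 A2 C hP1 v l1 l2 h1 k hk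
    have e2 := chainA2 hn A1 A2 C hP1 v l1 l2 h1 k hk
    have hp1 : l2 ^ (N + 1) = l2 ^ (N - k) * l2 ^ (k + 1) := by
      rw [← pow_add]; congr 1; omega
    have hp2 : l2 ^ (N + 1) = l2 ^ (N - k + 1) * l2 ^ k := by
      rw [← pow_add]; congr 1; omega
    have hXn : l2 ^ (N + 1) • (C ⟨k, hk⟩ * A1).mulVec v
        = (l2 ^ (N - k) * (-l1) ^ (k + 1)) • (C ⟨0, hn⟩ * A2).mulVec v := by
      rw [hp1, ← smul_smul, e1, smul_smul]
    have hYn : l2 ^ (N + 1) • (C ⟨k, hk⟩ * A2).mulVec v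
        = (l2 ^ (N - k + 1) * (-l1) ^ k) • (C ⟨0, hn⟩ * A2).mulVec v := by
      rw [hp2, ← smul_smul, e2, smul_smul]
    calc l2 ^ (N + 1) • (((N.choose k : ℂ) * cS c m ^ (N - k) * sS c m ^ k) •
          (sS c m • (C ⟨k, hk⟩ * A1).mulVec v + cS c m • (C ⟨k, hk⟩ * A2).mulVec v))
        = (((N.choose k : ℂ) * cS c m ^ (N - k) * sS c m ^ k) * sS c m) •
            (l2 ^ (N + 1) • (C ⟨k, hk⟩ * A1).mulVec v)
          + (((N.choose k : ℂ) * cS c m ^ (N - k) * sS c m ^ k) * cS c m) •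
            (l2 ^ (N + 1) • (C ⟨k, hk⟩ * A2).mulVec v) := by module
      _ = (((N.choose k : ℂ) * cS c m ^ (N - k) * sS c m ^ k) * sS c m) •
            ((l2 ^ (N - k) * (-l1) ^ (k + 1)) • (C ⟨0, hn⟩ * A2).mulVec v)
          + (((N.choose k : ℂ) * cS c m ^ (N - k) * sS c m ^ k) * cS c m) •
            ((l2 ^ (N - k + 1) * (-l1) ^ k) • (C ⟨0, hn⟩ * A2).mulVec v) := by
          rw [hXn, hYn]
      _ = (((N.choose k : ℂ) * (cS c m * l2) ^ (N - k)
            * (sS c m * -l1) ^ k) * (cS c m * l2 - sS c m * l1))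
          • (C ⟨0, hn⟩ * A2).mulVec v := by module
  rw [Finset.sum_congr rfl fun q _ => hterm q, ← Finset.sum_smul]
  congr 1
  calc (∑ q : Fin (N + 1), ((N.choose q.val : ℂ) * (cS c m * l2) ^ (N - q.val)
          * (sS c m * -l1) ^ q.val) * (cS c m * l2 - sS c m * l1))
      = (∑ k ∈ Finset.range (N + 1), ((sS c m * -l1) ^ k * (cS c m * l2) ^ (N - k)
          * (N.choose k : ℂ))) * (cS c m * l2 - sS c m * l1) := by
        rw [Finset.sum_mul, Fin.sum_univ_eq_sum_range
          (fun k => (((N.choose k : ℂ)) * (cS c m * l2) ^ (N - k)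
            * (sS c m * -l1) ^ k) * (cS c m * l2 - sS c m * l1)) (N + 1)]
        exact Finset.sum_congr rfl fun k _ => by ring
    _ = ((sS c m * -l1) + (cS c m * l2)) ^ N * (cS c m * l2 - sS c m * l1) := by
        rw [add_pow]
    _ = (cS c m * l2 - sS c m * l1) ^ (N + 1) := by
        have hb : (sS c m * -l1) + (cS c m * l2) = cS c m * l2 - sS c m * l1 := by ring
        rw [hb, ← pow_succ]

private lemma keyEM0 {n c : ℕ} (hn : 0 < n) (m : ℤ) (A1 A2 : Mat c) (C : Fin n → Mat c)
    (hP1 : CondP1 n c A1 A2 C) (v : Fin c → ℂ) (hA2 : A2.mulVec v = 0) :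
    (EM n c m A1 A2 C).mulVec v
      = sS c m ^ n • (C ⟨n - 1, by omega⟩ * A1).mulVec v := by
  obtain ⟨N, rfl⟩ : ∃ N, n = N + 1 := ⟨n - 1, by omega⟩
  have hzero2 : ∀ q : Fin (N + 1), (C q * A2).mulVec v = 0 := fun q => by
    rw [← Matrix.mulVec_mulVec, hA2, Matrix.mulVec_zero]
  have hzero1 : ∀ q : Fin (N + 1), q.val < N → (C q * A1).mulVec v = 0 := by
    rintro ⟨k, hk⟩ hk'
    have hk2 : k < N := hk'
    rw [(hP1.2 k (by omega)).2, ← Matrix.mulVec_mulVec, hA2, Matrix.mulVec_zero]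
  rw [EM_mulVec]
  simp only [Nat.add_sub_cancel]
  rw [Finset.sum_eq_single (⟨N, by omega⟩ : Fin (N + 1))]
  · rw [hzero2, Nat.choose_self, Nat.sub_self, smul_zero, add_zero]
    rw [pow_succ]
    module
  · intro q _ hq
    have hq' : q.val < N := by
      have h2 := q.isLt
      rcases Nat.lt_or_ge q.val N with h | h
      · exact h
      · exfalso
        exact hq (Fin.ext (show q.val = N by omega))
    rw [hzero1 q hq', hzero2, smul_zero, smul_zero, add_zero, smul_zero]
  · intro h; exact absurd (Finset.mem_univ _) h

end Stmt8Aux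


/-- under (P1) and invertibility of A_{2m}, condition (P3) holds if and
only if the triple (B_m, E_m, e) satisfies condition (T2). -/
theorem stmt8 (n c : ℕ) (hn : 0 < n) (hc : 0 < c) (m : ℕ) (hm : m ≤ c)
    (A1 A2 : Mat c) (C : Fin n → Mat c) (e : Fin c → ℂ)
    (hP1 : CondP1 n c A1 A2 C) (hinv : IsUnit (A2M c m A1 A2)) :
    CondP3 n c A1 A2 (C ⟨0, hn⟩) (C ⟨n - 1, by omega⟩) e ↔
      CondT2 c (BM c m A1 A2) (EM n c m A1 A2 C) e := by
  have hcs := trigsq c m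
  have hn1 : n - 1 + 1 = n := by omega
  have hfac : ∀ z : ℂ, A2M c m A1 A2 * (BM c m A1 A2 + z • 1)
      = A1M c m A1 A2 + z • A2M c m A1 A2 := by
    intro z
    have := hinv.invertible
    rw [mul_add, BM, Matrix.mul_inv_cancel_left_of_invertible, mul_smul_comm, mul_one]
  constructor
  · -- (P3) → (T2)
    intro hP3 z w v hb he hev
    set l1 : ℂ := z * cS c m - sS c m with hl1
    set l2 : ℂ := cS c m + z * sS c m with hl2
    have hz2 : cS c m * l2 - sS c m * l1 = 1 := by
      rw [hl1, hl2]; linear_combination hcs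
    have hz1 : cS c m * l1 + sS c m * l2 = z := by
      rw [hl1, hl2]; linear_combination z * hcs
    have h1 : (l2 • A1 + l1 • A2).mulVec v = 0 := by
      have hrot := rotA c m A1 A2 l1 l2
      rw [hz1, hz2, one_smul] at hrot
      rw [← hrot, ← hfac z, ← Matrix.mulVec_mulVec, hb, Matrix.mulVec_zero]
    have hne : (l1, l2) ≠ 0 := by
      intro h
      rw [Prod.mk_eq_zero] at h
      rw [h.1, h.2] at hz2
      simp at hz2
    have hEv : (EM n c m A1 A2 C).mulVec v = -(w • v) :=
      smul_eq_of_add_smul_mulVec _ _ _ he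
    by_cases hl2z : l2 = 0
    · -- degenerate direction: A2 v = 0
      have hsm : sS c m * l1 = -1 := by rw [hl2z] at hz2; linear_combination -hz2
      have hsmne : sS c m ≠ 0 := fun h => by rw [h] at hsm; simp at hsm
      have hl1ne : l1 ≠ 0 := fun h => by rw [h] at hsm; simp at hsm
      have hA2v : A2.mulVec v = 0 := by
        rw [hl2z, zero_smul, zero_add, Matrix.smul_mulVec] at h1
        exact (smul_eq_zero.mp h1).resolve_left hl1ne
      have hEM0 := keyEM0 hn m A1 A2 C hP1 v hA2v
      have hcan : sS c m ^ n ≠ 0 := pow_ne_zero _ hsmne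
      refine hP3 l1 l2 0 ((-1:ℂ)^(n-1) * w * (sS c m ^ n)⁻¹) hne ?_ v h1 ?_ ?_ hev
      · rw [hl2z]; simp [zero_pow hn.ne']
      · rw [zero_smul, add_zero, ← Matrix.mulVec_mulVec, hA2v, Matrix.mulVec_zero]
      · rw [Matrix.add_mulVec, Matrix.smul_mulVec, Matrix.one_mulVec]
        have h4 : ((-1:ℂ))^(n-1) * (-1:ℂ)^(n-1) = 1 := by
          rw [← pow_add]; exact Even.neg_one_pow ⟨n-1, rfl⟩
        have hc' : ((-1:ℂ))^(n-1) * ((-1:ℂ)^(n-1) * w * (sS c m ^ n)⁻¹)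
            = w * (sS c m ^ n)⁻¹ := by
          linear_combination (w * (sS c m ^ n)⁻¹) * h4
        rw [hc']
        have hz0 : sS c m ^ n • ((C ⟨n-1, by omega⟩ * A1).mulVec v
            + (w * (sS c m ^ n)⁻¹) • v) = 0 := by
          rw [smul_add, ← hEM0, hEv, smul_smul]
          have hww : sS c m ^ n * (w * (sS c m ^ n)⁻¹) = w := by
            field_simp
          rw [hww, neg_add_cancel]
        exact (smul_eq_zero.mp hz0).resolve_left hcan
    · -- main direction
      have hkey := keyEM hn m A1 A2 C hP1 v l1 l2 h1
      rw [hz2, one_pow, one_smul] at hkey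
      have hu : (C ⟨0, hn⟩ * A2).mulVec v = -((w * l2 ^ n) • v) := by
        rw [← hkey, hEv]; module
      refine hP3 l1 l2 (w * l2 ^ n) (-(w * l1 ^ n)) hne (by ring) v h1 ?_ ?_ hev
      · rw [Matrix.add_mulVec, Matrix.smul_mulVec, Matrix.one_mulVec, hu,
          neg_add_cancel]
      · have e1 := chainA1 hn A1 A2 C hP1 v l1 l2 h1 (n-1) (by omega)
        have hpa : l2 ^ (n-1+1) = l2 ^ n := by rw [hn1]
        have hpb : (-l1) ^ (n-1+1) = (-l1) ^ n := by rw [hn1]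
        rw [hpa, hpb, hu] at e1
        have hX : (C ⟨n-1, by omega⟩ * A1).mulVec v = (-((-l1)^n * w)) • v := by
          apply smul_right_injective (Fin c → ℂ) (pow_ne_zero n hl2z)
          show l2 ^ n • _ = l2 ^ n • _
          rw [e1]; module
        rw [Matrix.add_mulVec, Matrix.smul_mulVec, Matrix.one_mulVec, hX,
          ← add_smul]
        have hsc : (-((-l1)^n * w)) + ((-1:ℂ)^(n-1) * -(w*l1^n)) = 0 := by
          have hnp : (-l1)^n = (-1:ℂ)^n * l1^n := by rw [neg_pow]
          have hsgn : ((-1:ℂ))^n = (-1:ℂ)^(n-1) * (-1) := by rw [← pow_succ, hn1]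
          rw [hnp, hsgn]; ring
        rw [hsc, zero_smul]
  · -- (T2) → (P3)
    intro hT2 l1 l2 m1 m2 hne hcon v h1 h2 h3 hev
    by_cases hz2 : cS c m * l2 - sS c m * l1 = 0
    · -- v in kernel of A2M
      have hz1 : cS c m * l1 + sS c m * l2 ≠ 0 := by
        intro h0
        apply hne
        rw [Prod.mk_eq_zero]
        constructor
        · linear_combination cS c m * h0 - sS c m * hz2 - l1 * hcs
        · linear_combination sS c m * h0 + cS c m * hz2 - l2 * hcs
      have hrot := rotA c m A1 A2 l1 l2
      rw [hz2, zero_smul, zero_add] at hrot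
      have h5 : ((cS c m * l1 + sS c m * l2) • A2M c m A1 A2).mulVec v = 0 := by
        rw [hrot]; exact h1
      rw [Matrix.smul_mulVec] at h5
      exact mulVec_eq_zero_of_isUnit _ hinv v ((smul_eq_zero.mp h5).resolve_left hz1)
    · -- z2 ≠ 0
      have hrot := rotA c m A1 A2 l1 l2
      set z1 : ℂ := cS c m * l1 + sS c m * l2 with hz1def
      set z2 : ℂ := cS c m * l2 - sS c m * l1 with hz2def
      have hb : (BM c m A1 A2 + (z1/z2) • 1).mulVec v = 0 := by
        have h6 : z2 • (A1M c m A1 A2 + (z1/z2) • A2M c m A1 A2)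
            = z2 • A1M c m A1 A2 + z1 • A2M c m A1 A2 := by
          rw [smul_add, smul_smul, mul_comm z2 (z1/z2), div_mul_cancel₀ z1 hz2]
        have h7 : z2 • (A2M c m A1 A2 * (BM c m A1 A2 + (z1/z2) • 1)).mulVec v = 0 := by
          rw [hfac (z1/z2), ← Matrix.smul_mulVec, h6, hrot, h1]
        have h8 := (smul_eq_zero.mp h7).resolve_left hz2
        rw [← Matrix.mulVec_mulVec] at h8
        exact mulVec_eq_zero_of_isUnit _ hinv _ h8
      by_cases hl2 : l2 = 0
      · -- degenerate: A2 v = 0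
        have hsm : sS c m ≠ 0 := by
          intro h; apply hz2; rw [hz2def, hl2, h]; ring
        have hl1 : l1 ≠ 0 := by
          intro h; apply hz2; rw [hz2def, hl2, h]; ring
        have hA2v : A2.mulVec v = 0 := by
          rw [hl2, zero_smul, zero_add, Matrix.smul_mulVec] at h1
          exact (smul_eq_zero.mp h1).resolve_left hl1
        have hEM0 := keyEM0 hn m A1 A2 C hP1 v hA2v
        have h3' : (C ⟨n-1, by omega⟩ * A1).mulVec v = -(((-1:ℂ)^(n-1) * m2) • v) :=
          smul_eq_of_add_smul_mulVec _ _ _ h3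
        apply hT2 (z1/z2) ((-1:ℂ)^(n-1) * sS c m ^ n * m2) v hb ?_ hev
        rw [Matrix.add_mulVec, Matrix.smul_mulVec, Matrix.one_mulVec, hEM0, h3']
        module
      · -- main case
        have hkey := keyEM hn m A1 A2 C hP1 v l1 l2 h1
        rw [← hz2def] at hkey
        have h2' : (C ⟨0, hn⟩ * A2).mulVec v = -(m1 • v) :=
          smul_eq_of_add_smul_mulVec _ _ _ h2
        have hEMv : (EM n c m A1 A2 C).mulVec v = -((m1 * z2^n / l2^n) • v) := by
          apply smul_right_injective (Fin c → ℂ) (pow_ne_zero n hl2)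
          show l2 ^ n • _ = l2 ^ n • _
          rw [hkey, h2']
          have hww : l2^n * (m1 * z2^n / l2^n) = z2^n * m1 := by
            field_simp
          rw [smul_neg, smul_neg, smul_smul, smul_smul, hww]
        apply hT2 (z1/z2) (m1 * z2^n / l2^n) v hb ?_ hev
        rw [Matrix.add_mulVec, Matrix.smul_mulVec, Matrix.one_mulVec, hEMv,
          neg_add_cancel]
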